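/- Let 𝕌 ⊆ ℝ^{n_u} be closed and convex, let L : ℝ^{n_x}×ℝ^{n_u} → ℝ be convex and non-negative, let A ∈ ℝ^{n_x×n_x}, let B ∈ ℝ^{n_x×n_u} have rank(B) = n_u, and let M : ℝ^{n_x} → ℝ ∪ {∞} be a proper compact convex function. Then for every x ∈ ℝ^{n_x} such that there exists u ∈ 𝕌 with Ax + Bu ∈ dom(M), the infimum inf_{u∈𝕌} [ L(x,u) + M(Ax + Bu) ] is finite and attained by some u⋆ ∈ 𝕌. -/

import Mathlib

open Matrix Set MeasureTheory
open scoped Classical Pointwise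

noncomputable section

def epiF {nx : ℕ} (M : (Fin nx → ℝ) → EReal) : Set ((Fin nx → ℝ) × ℝ) :=
  {p | M p.1 ≤ (p.2 : EReal)}

def domF {nx : ℕ} (M : (Fin nx → ℝ) → EReal) : Set (Fin nx → ℝ) :=
  {x | M x < ⊤}

def ProperCompactConvex {nx : ℕ} (M : (Fin nx → ℝ) → EReal) : Prop :=
  (∀ x, M x ≠ ⊥) ∧ (domF M).Nonempty ∧ IsCompact (domF M) ∧
    IsClosed (epiF M) ∧ Convex ℝ (epiF M)

def Pset {nx f : ℕ} (G : Matrix (Fin f) (Fin nx) ℝ) (h : Fin f → ℝ)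
    (z : Fin f → ℝ) : Set ((Fin nx → ℝ) × ℝ) :=
  {p | ∀ i, (G *ᵥ p.1) i + h i * p.2 ≤ z i}

def Kcone (nx : ℕ) : Set ((Fin nx → ℝ) × ℝ) := {p | p.1 = 0 ∧ 0 ≤ p.2}

def vertPt {nx f : ℕ} (R : Matrix (Fin nx) (Fin f) ℝ) (s : Fin f → ℝ)
    (z : Fin f → ℝ) : (Fin nx → ℝ) × ℝ := (R *ᵥ z, s ⬝ᵥ z)

def ConfigTriplet {nx f e v : ℕ} (G : Matrix (Fin f) (Fin nx) ℝ) (h : Fin f → ℝ)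
    (E : Matrix (Fin e) (Fin f) ℝ)
    (R : Fin v → Matrix (Fin nx) (Fin f) ℝ) (s : Fin v → Fin f → ℝ) : Prop :=
  ∀ z : Fin f → ℝ,
    Pset G h z = convexHull ℝ (Set.range fun i => vertPt (R i) (s i) z) + Kcone nx
      ↔ ∀ i, (E *ᵥ z) i ≤ 0

def PolyFamily {nx f e : ℕ} (G : Matrix (Fin f) (Fin nx) ℝ) (h : Fin f → ℝ)
    (E : Matrix (Fin e) (Fin f) ℝ) : Set (Set ((Fin nx → ℝ) × ℝ)) :=
  {P | ∃ z : Fin f → ℝ, (∀ i, (E *ᵥ z) i ≤ 0) ∧ P = Pset G h z}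

def indE {n : ℕ} (S : Set (Fin n → ℝ)) (x : Fin n → ℝ) : EReal :=
  if x ∈ S then 0 else ⊤

def IsLCLF {nx nu : ℕ} (A : Matrix (Fin nx) (Fin nx) ℝ) (B : Matrix (Fin nx) (Fin nu) ℝ)
    (𝕏 : Set (Fin nx → ℝ)) (𝕌 : Set (Fin nu → ℝ))
    (L : (Fin nx → ℝ) → (Fin nu → ℝ) → ℝ) (M : (Fin nx → ℝ) → EReal) : Prop :=
  M 0 = 0 ∧ (∀ x, x ≠ 0 → 0 < M x) ∧ ProperCompactConvex M ∧
    ∀ x, (⨅ u ∈ 𝕌, ((L x u : EReal) + indE 𝕏 x + M (A *ᵥ x + B *ᵥ u))) ≤ M x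

def RobustCLF {nx nu : ℕ}
    (𝔻 : Set (Matrix (Fin nx) (Fin nx) ℝ × Matrix (Fin nx) (Fin nu) ℝ × (Fin nx → ℝ)))
    (𝕏 : Set (Fin nx → ℝ)) (𝕌 : Set (Fin nu → ℝ))
    (L : (Fin nx → ℝ) → (Fin nu → ℝ) → ℝ) (M : (Fin nx → ℝ) → EReal) : Prop :=
  (∀ x, 0 ≤ M x) ∧ ProperCompactConvex M ∧ (∃ xs ∈ 𝕏, M xs = 0) ∧
    ∀ x, (⨅ u ∈ 𝕌, ⨆ d ∈ 𝔻,
      ((L x u : EReal) + indE 𝕏 x + M (d.1 *ᵥ x + d.2.1 *ᵥ u + d.2.2))) ≤ M x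

def IsRCI {nx nu : ℕ}
    (𝔻 : Set (Matrix (Fin nx) (Fin nx) ℝ × Matrix (Fin nx) (Fin nu) ℝ × (Fin nx → ℝ)))
    (𝕏 : Set (Fin nx → ℝ)) (𝕌 : Set (Fin nu → ℝ)) (X : Set (Fin nx → ℝ)) : Prop :=
  X ⊆ 𝕏 ∧ IsCompact X ∧ Convex ℝ X ∧
    ∀ x ∈ X, ∃ u ∈ 𝕌, ∀ d ∈ 𝔻, d.1 *ᵥ x + d.2.1 *ᵥ u + d.2.2 ∈ X

def LPSDwrt {nx nu : ℕ}
    (𝔻 : Set (Matrix (Fin nx) (Fin nx) ℝ × Matrix (Fin nx) (Fin nu) ℝ × (Fin nx → ℝ)))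
    (𝕌 : Set (Fin nu → ℝ)) (L : (Fin nx → ℝ) → (Fin nu → ℝ) → ℝ)
    (Xs : Set (Fin nx → ℝ)) : Prop :=
  ∀ x ∈ Xs, ∃ u ∈ 𝕌, L x u = 0 ∧ ∀ d ∈ 𝔻, d.1 *ᵥ x + d.2.1 *ᵥ u + d.2.2 ∈ Xs

def RobustLambdaContractive {nx nu : ℕ}
    (𝔻 : Set (Matrix (Fin nx) (Fin nx) ℝ × Matrix (Fin nx) (Fin nu) ℝ × (Fin nx → ℝ)))
    (𝕌 : Set (Fin nu → ℝ)) (Xs : Set (Fin nx → ℝ)) (lam : ℝ)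
    (X : Set (Fin nx → ℝ)) : Prop :=
  ∀ x ∈ X, ∃ u ∈ 𝕌, ∀ d ∈ 𝔻,
    d.1 *ᵥ x + d.2.1 *ᵥ u + d.2.2 ∈ lam • X + (1 - lam) • Xs

def Jcost {nx nu : ℕ} (A : Matrix (Fin nx) (Fin nx) ℝ) (B : Matrix (Fin nx) (Fin nu) ℝ)
    (𝕌 : Set (Fin nu → ℝ)) (X : Set (Fin nx → ℝ))
    (L : (Fin nx → ℝ) → (Fin nu → ℝ) → ℝ) (M : (Fin nx → ℝ) → EReal)
    (N : ℕ) (x0 : Fin nx → ℝ) : EReal :=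
  sInf {c : EReal | ∃ (xs : ℕ → (Fin nx → ℝ)) (us : ℕ → (Fin nu → ℝ)),
    xs 0 = x0 ∧
    (∀ k < N, us k ∈ 𝕌 ∧ xs k ∈ X ∧ xs (k + 1) = A *ᵥ xs k + B *ᵥ us k) ∧
    c = ((∑ k ∈ Finset.range N, L (xs k) (us k) : ℝ) : EReal) + M (xs N)}

def Dij {nx nu f : ℕ} (G : Matrix (Fin f) (Fin nx) ℝ)
    (𝔻 : Set (Matrix (Fin nx) (Fin nx) ℝ × Matrix (Fin nx) (Fin nu) ℝ × (Fin nx → ℝ)))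
    (xi : Fin nx → ℝ) (c : Fin nu → ℝ) (j : Fin f) : ℝ :=
  sSup ((fun d : Matrix (Fin nx) (Fin nx) ℝ × Matrix (Fin nx) (Fin nu) ℝ × (Fin nx → ℝ) =>
    (G *ᵥ (d.1 *ᵥ xi + d.2.1 *ᵥ c + d.2.2)) j) '' 𝔻)

/-- A lower semicontinuous `EReal`-valued function attains its minimum on a
nonempty compact set. -/
lemma exists_min_lsc {α : Type*} [TopologicalSpace α] [T2Space α] {S : Set α}
    (hS : IsCompact S) (hne : S.Nonempty) {f : α → EReal}
    (hf : LowerSemicontinuous f) :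
    ∃ a ∈ S, ∀ b ∈ S, f a ≤ f b := by
  set m : EReal := sInf (f '' S) with hm
  have hmle : ∀ b ∈ S, m ≤ f b := fun b hb => sInf_le ⟨b, hb, rfl⟩
  rcases eq_top_or_lt_top m with htop | hlt
  · obtain ⟨a, ha⟩ := hne
    refine ⟨a, ha, fun b hb => ?_⟩
    have : (⊤ : EReal) ≤ f b := htop ▸ hmle b hb
    simp [top_le_iff.1 this]
  · -- consider the sublevel sets
    set ι := {c : EReal // m < c}
    have hι : Nonempty ι := ⟨⟨⊤, hlt⟩⟩
    set K : ι → Set α := fun c => S ∩ f ⁻¹' Iic c.1 with hK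
    have hKcl : ∀ c : ι, IsClosed (K c) :=
      fun c => hS.isClosed.inter (hf.isClosed_preimage c.1)
    have hKcpt : ∀ c : ι, IsCompact (K c) := fun c => hS.inter_right (hf.isClosed_preimage c.1)
    have hKne : ∀ c : ι, (K c).Nonempty := by
      rintro ⟨c, hc⟩
      obtain ⟨y, ⟨b, hb, rfl⟩, hyc⟩ := sInf_lt_iff.1 hc
      exact ⟨b, hb, le_of_lt hyc⟩
    have hdir : Directed (· ⊇ ·) K := by
      rintro ⟨c, hc⟩ ⟨d, hd⟩
      refine ⟨⟨min c d, lt_min hc hd⟩, ?_, ?_⟩ <;>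
      · rintro a ⟨h1, h2⟩
        simp only [mem_preimage, mem_Iic] at h2 ⊢
        exact ⟨h1, le_trans h2 (by simp [min_le_left, min_le_right])⟩
    obtain ⟨a, ha⟩ := IsCompact.nonempty_iInter_of_directed_nonempty_isCompact_isClosed
      K hdir hKne hKcpt hKcl
    have haS : a ∈ S := (mem_iInter.1 ha ⟨⊤, hlt⟩).1
    refine ⟨a, haS, fun b hb => ?_⟩
    have ham : f a ≤ m := by
      by_contra hcon
      push_neg at hcon
      obtain ⟨c, hc1, hc2⟩ := exists_between hcon
      exact absurd (mem_iInter.1 ha ⟨c, hc1⟩).2 (not_le.2 hc2)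
    exact ham.trans (hmle b hb)

/-- A proper compact convex function (never `⊥`, closed epigraph) is lower
semicontinuous. -/
lemma lsc_of_closed_epi {nx : ℕ} {M : (Fin nx → ℝ) → EReal}
    (hbot : ∀ x, M x ≠ ⊥) (hepi : IsClosed (epiF M)) :
    LowerSemicontinuous M := by
  intro p c hc
  rcases eq_bot_or_bot_lt c with rfl | hcbot
  · filter_upwards with q
    exact (hbot q).bot_lt
  · obtain ⟨c', hc1, hc2⟩ := EReal.exists_between_coe_real hc
    have hopen : IsOpen {q : Fin nx → ℝ | (q, c') ∉ epiF M} := by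
      have : Continuous fun q : Fin nx → ℝ => (q, c') := continuous_id.prodMk continuous_const
      exact hepi.isOpen_compl.preimage this
    have hmem : p ∈ {q : Fin nx → ℝ | (q, c') ∉ epiF M} := fun h => absurd h (not_le.2 hc2)
    filter_upwards [hopen.mem_nhds hmem] with q hq
    have : ¬ M q ≤ (c' : EReal) := hq
    exact hc1.trans (not_le.1 this)

/-- Footnote 3: for every `x` such that some admissible `u`
renders `Ax + Bu ∈ dom(M)`, the infimum `inf_{u ∈ 𝕌} [L(x,u) + M(Ax + Bu)]`
is finite and attained by some `u⋆ ∈ 𝕌`. -/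
theorem stmt_8 {nx nu : ℕ}
    (𝕌 : Set (Fin nu → ℝ)) (hUcl : IsClosed 𝕌) (hUcv : Convex ℝ 𝕌)
    (L : (Fin nx → ℝ) → (Fin nu → ℝ) → ℝ)
    (hLcv : ConvexOn ℝ Set.univ (fun p : (Fin nx → ℝ) × (Fin nu → ℝ) => L p.1 p.2))
    (hLnn : ∀ x u, 0 ≤ L x u)
    (A : Matrix (Fin nx) (Fin nx) ℝ) (B : Matrix (Fin nx) (Fin nu) ℝ)
    (hB : B.rank = nu)
    (M : (Fin nx → ℝ) → EReal) (hM : ProperCompactConvex M)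
    (x : Fin nx → ℝ)
    (hfeas : ∃ u ∈ 𝕌, A *ᵥ x + B *ᵥ u ∈ domF M) :
    ∃ ustar ∈ 𝕌, ∃ r : ℝ,
      (L x ustar : EReal) + M (A *ᵥ x + B *ᵥ ustar) = (r : EReal) ∧
      (∀ u ∈ 𝕌, (r : EReal) ≤ (L x u : EReal) + M (A *ᵥ x + B *ᵥ u)) := by
  obtain ⟨hbot, hdomne, hdomcpt, hepicl, hepicv⟩ := hM
  have hMlsc : LowerSemicontinuous M := lsc_of_closed_epi hbot hepicl
  -- L x · is continuous (convex on a finite-dimensional space)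
  have hLcont : Continuous fun u : Fin nu → ℝ => L x u := by
    have h1 : Continuous fun p : (Fin nx → ℝ) × (Fin nu → ℝ) => L p.1 p.2 :=
      continuousOn_univ.1 (hLcv.continuousOn isOpen_univ)
    exact h1.comp (continuous_const.prodMk continuous_id)
  -- the affine map u ↦ A x + B u is a closed embedding
  have hkerB : LinearMap.ker B.mulVecLin = ⊥ := by
    have hrank : B.rank = Module.finrank ℝ (LinearMap.range B.mulVecLin) := rfl
    have h := LinearMap.finrank_range_add_finrank_ker B.mulVecLin
    rw [← hrank, hB] at h
    have hfr : Module.finrank ℝ (Fin nu → ℝ) = nu := Module.finrank_fin_fun ℝ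
    rw [hfr] at h
    have : Module.finrank ℝ (LinearMap.ker B.mulVecLin) = 0 := by omega
    exact Submodule.finrank_eq_zero.1 this
  have hBemb : Topology.IsClosedEmbedding fun u : Fin nu → ℝ => B *ᵥ u := by
    have := LinearMap.isClosedEmbedding_of_injective (𝕜 := ℝ) hkerB
    exact this
  have hTemb : Topology.IsClosedEmbedding fun u : Fin nu → ℝ => A *ᵥ x + B *ᵥ u :=
    (Homeomorph.addLeft (A *ᵥ x)).isClosedEmbedding.comp hBemb
  -- the feasible set S is compact and nonempty
  set S : Set (Fin nu → ℝ) :=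
    𝕌 ∩ (fun u : Fin nu → ℝ => A *ᵥ x + B *ᵥ u) ⁻¹' (domF M) with hS
  have hScpt : IsCompact S := by
    have hpre : IsCompact ((fun u : Fin nu → ℝ => A *ᵥ x + B *ᵥ u) ⁻¹' (domF M)) := by
      refine hTemb.isInducing.isCompact_preimage hTemb.isClosed_range ?_
      exact hdomcpt
    exact hpre.inter_left hUcl
  have hSne : S.Nonempty := by
    obtain ⟨u, hu, hmem⟩ := hfeas
    exact ⟨u, hu, hmem⟩
  -- the objective is lower semicontinuous
  set φ : (Fin nu → ℝ) → EReal :=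
    fun u => (L x u : EReal) + M (A *ᵥ x + B *ᵥ u) with hφ
  have hφlsc : LowerSemicontinuous φ := by
    have h1 : Continuous fun u : Fin nu → ℝ => ((L x u : ℝ) : EReal) :=
      continuous_coe_real_ereal.comp hLcont
    have h2 : LowerSemicontinuous fun u : Fin nu → ℝ => M (A *ᵥ x + B *ᵥ u) :=
      hMlsc.comp hTemb.continuous
    refine h1.lowerSemicontinuous.add' h2 fun u => ?_
    exact EReal.continuousAt_add (Or.inl (EReal.coe_ne_top _)) (Or.inl (EReal.coe_ne_bot _))
  obtain ⟨ustar, hustarS, hmin⟩ := exists_min_lsc hScpt hSne hφlsc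
  obtain ⟨hustarU, hustardom⟩ := hustarS
  -- the minimal value is a real number
  have hMfin : M (A *ᵥ x + B *ᵥ ustar) ≠ ⊤ := (lt_top_iff_ne_top.1 hustardom)
  obtain ⟨m, hm⟩ : ∃ m : ℝ, M (A *ᵥ x + B *ᵥ ustar) = (m : EReal) := by
    lift M (A *ᵥ x + B *ᵥ ustar) to ℝ using ⟨hMfin, hbot _⟩ with m
    exact ⟨m, rfl⟩
  refine ⟨ustar, hustarU, L x ustar + m, ?_, ?_⟩
  · rw [hm, ← EReal.coe_add]
  · intro u hu
    by_cases hdom : A *ᵥ x + B *ᵥ u ∈ domF M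
    · have huS : u ∈ S := ⟨hu, hdom⟩
      have := hmin u huS
      rw [hφ] at this
      simp only at this
      calc ((L x ustar + m : ℝ) : EReal)
          = (L x ustar : EReal) + M (A *ᵥ x + B *ᵥ ustar) := by rw [hm, ← EReal.coe_add]
        _ ≤ _ := this
    · have : M (A *ᵥ x + B *ᵥ u) = ⊤ := by
        by_contra h
        exact hdom (lt_top_iff_ne_top.2 h)
      rw [this, EReal.coe_add_top]
      exact le_top
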